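/- The size of the design space of tree-structured multi-task architectures is at most ((2^{T−1} − 1) · B + 1)^{T−1}: for a task set 𝒯 with |𝒯| = T ≥ 1 and B ≥ 1 branching points, the number of tree-structured layouts is at most ((2^{T−1} − 1)·B + 1)^{T−1}. -/

import Mathlib

/-- `P` is a partition of the finite task set `S` into nonempty pairwise-disjoint task sets. -/
def IsPartition {α : Type*} [DecidableEq α] (S : Finset α) (P : Finset (Finset α)) : Prop :=
  (∀ p ∈ P, p.Nonempty) ∧ (∀ p ∈ P, ∀ q ∈ P, p ≠ q → Disjoint p q) ∧ P.sup id = S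

/-- The partition `Q` refines the partition `P`: every part of `Q` is contained in some
part of `P`. -/
def Refines {α : Type*} (Q P : Finset (Finset α)) : Prop :=
  ∀ q ∈ Q, ∃ p ∈ P, q ⊆ p

/-- A tree-structured layout over the task set `S` with `B` branching points: a sequence of
partitions of `S` such that later partitions refine earlier ones. -/
def IsLayout {α : Type*} [DecidableEq α] (S : Finset α) {B : ℕ}
    (L : Fin B → Finset (Finset α)) : Prop :=
  (∀ i, IsPartition S (L i)) ∧ ∀ i j : Fin B, i ≤ j → Refines (L j) (L i)

/-- `L'` is obtained from the layout `L` by a layout cut: choose an index `i` and a task set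
`P` that is a part of `L j` for every `j ≥ i`, divide `P` into two nonempty disjoint sets
`A`, `B'` with `A ∪ B' = P`; keep `L' j = L j` for `j < i` and for `j ≥ i` replace the part
`P` by the two parts `A` and `B'`. -/
def IsCut {α : Type*} [DecidableEq α] {B : ℕ}
    (L L' : Fin B → Finset (Finset α)) : Prop :=
  ∃ (i : Fin B) (P A B' : Finset α),
    (∀ j, i ≤ j → P ∈ L j) ∧ A.Nonempty ∧ B'.Nonempty ∧ Disjoint A B' ∧ A ∪ B' = P ∧
    (∀ j, j < i → L' j = L j) ∧
    (∀ j, i ≤ j → L' j = insert A (insert B' ((L j).erase P)))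

namespace CardLayoutsAux

variable {α : Type*} [DecidableEq α]

lemma part_subset {S : Finset α} {P : Finset (Finset α)} (hP : IsPartition S P)
    {p : Finset α} (hp : p ∈ P) : p ⊆ S := by
  rw [← hP.2.2]
  exact Finset.le_sup (f := id) hp

lemma part_eq {S : Finset α} {P : Finset (Finset α)} (hP : IsPartition S P)
    {p q : Finset α} (hp : p ∈ P) (hq : q ∈ P) (h : ¬ Disjoint p q) : p = q := by
  by_contra hne
  exact h (hP.2.1 p hp q hq hne)

lemma exists_part {S : Finset α} {P : Finset (Finset α)} (hP : IsPartition S P)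
    {x : α} (hx : x ∈ S) : ∃ p ∈ P, x ∈ p := by
  rw [← hP.2.2] at hx
  simpa using (Finset.mem_sup.mp hx)

lemma part_eq_of_mem {S : Finset α} {P : Finset (Finset α)} (hP : IsPartition S P)
    {p q : Finset α} (hp : p ∈ P) (hq : q ∈ P) {x : α} (hxp : x ∈ p) (hxq : x ∈ q) :
    p = q :=
  part_eq hP hp hq (fun h => (Finset.disjoint_left.mp h) hxp hxq)

lemma refines_subset {S : Finset α} {P Q : Finset (Finset α)}
    (hP : IsPartition S P) (hQ : IsPartition S Q)
    (h1 : Refines Q P) (h2 : Refines P Q) : Q ⊆ P := by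
  intro q hq
  obtain ⟨p, hp, hqp⟩ := h1 q hq
  obtain ⟨q', hq', hpq'⟩ := h2 p hp
  obtain ⟨x, hx⟩ := hQ.1 q hq
  have : q = q' := part_eq_of_mem hQ hq hq' hx (hpq' (hqp hx))
  have : q = p := Finset.Subset.antisymm hqp (this ▸ hpq')
  exact this ▸ hp

lemma refines_antisymm {S : Finset α} {P Q : Finset (Finset α)}
    (hP : IsPartition S P) (hQ : IsPartition S Q)
    (h1 : Refines Q P) (h2 : Refines P Q) : Q = P :=
  Finset.Subset.antisymm (refines_subset hP hQ h1 h2) (refines_subset hQ hP h2 h1)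

/-- If `Q` strictly refines `P`, some part of `P` contains two distinct parts of `Q`. -/
lemma exists_two_parts {S : Finset α} {P Q : Finset (Finset α)}
    (hP : IsPartition S P) (hQ : IsPartition S Q)
    (h1 : Refines Q P) (hne : Q ≠ P) :
    ∃ q ∈ Q, ∃ q' ∈ Q, ∃ p ∈ P, q ≠ q' ∧ q ⊆ p ∧ q' ⊆ p := by
  by_contra hcon
  push_neg at hcon
  -- then P refines Q, so Q = P, contradiction
  apply hne
  apply refines_antisymm hP hQ h1
  intro p hp
  obtain ⟨x, hx⟩ := hP.1 p hp
  obtain ⟨q, hq, hxq⟩ := exists_part hQ (part_subset hP hp hx)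
  obtain ⟨p', hp', hqp'⟩ := h1 q hq
  have hpp' : p = p' := part_eq_of_mem hP hp hp' hx (hqp' hxq)
  subst hpp'
  refine ⟨q, hq, ?_⟩
  intro y hy
  obtain ⟨q', hq', hyq'⟩ := exists_part hQ (part_subset hP hp hy)
  obtain ⟨p'', hp'', hq'p''⟩ := h1 q' hq'
  have : p = p'' := part_eq_of_mem hP hp hp'' hy (hq'p'' hyq')
  subst this
  have : q = q' := by
    by_contra hqq
    exact (hcon q hq q' hq' p hp hqq hqp') hq'p''
  exact this ▸ hyq'

lemma card_partition_le {S : Finset α} {P : Finset (Finset α)} (hP : IsPartition S P) :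
    P.card ≤ S.card := by
  classical
  rcases P.eq_empty_or_nonempty with rfl | ⟨p₀, hp₀⟩
  · simp
  obtain ⟨x₀, _⟩ := hP.1 p₀ hp₀
  have hne : Nonempty α := ⟨x₀⟩
  have hch : ∀ p ∈ P, ∃ x ∈ S, x ∈ p := by
    intro p hp
    obtain ⟨x, hx⟩ := hP.1 p hp
    exact ⟨x, part_subset hP hp hx, hx⟩
  choose f hfS hfmem using hch
  refine Finset.card_le_card_of_injOn
    (fun p => if h : p ∈ P then f p h else Classical.arbitrary α) ?_ ?_
  · intro p hp
    simp only [Finset.mem_coe] at hp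
    simpa [dif_pos hp] using hfS p hp
  · intro p hp q hq hfe
    simp only [Finset.mem_coe] at hp hq
    simp only [dif_pos hp, dif_pos hq] at hfe
    exact part_eq_of_mem hP hp hq (hfmem p hp) (hfe ▸ hfmem q hq)

/-- The parts resulting from cutting off `A` from the part of `Lj` containing it. -/
def cutParts (Lj : Finset (Finset α)) (A : Finset α) : Finset (Finset α) :=
  insert A (insert (((Lj.filter (fun p => A ⊆ p)).sup id) \ A)
    (Lj.erase ((Lj.filter (fun p => A ⊆ p)).sup id)))

/-- Apply a cut at time `i` with piece `A` to a layout. -/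
def applyCut {B : ℕ} (L : Fin B → Finset (Finset α)) (i : Fin B) (A : Finset α) :
    Fin B → Finset (Finset α) :=
  fun j => if i ≤ j then cutParts (L j) A else L j

lemma cutParts_eq {Lj : Finset (Finset α)} {A C : Finset α}
    (hAC : Disjoint A C) (hA : A.Nonempty)
    (hmem : A ∪ C ∈ Lj)
    (hdisj : ∀ p ∈ Lj, ∀ q ∈ Lj, p ≠ q → Disjoint p q) :
    cutParts Lj A = insert A (insert C (Lj.erase (A ∪ C))) := by
  have hfil : Lj.filter (fun p => A ⊆ p) = {A ∪ C} := by
    ext p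
    simp only [Finset.mem_filter, Finset.mem_singleton]
    constructor
    · rintro ⟨hp, hAp⟩
      by_contra hne
      have := hdisj p hp (A ∪ C) hmem hne
      obtain ⟨x, hx⟩ := hA
      exact (Finset.disjoint_left.mp this) (hAp hx) (Finset.mem_union_left _ hx)
    · rintro rfl
      exact ⟨hmem, Finset.subset_union_left⟩
  rw [cutParts, hfil]
  simp only [Finset.sup_singleton, id]
  rw [Finset.union_sdiff_cancel_left hAC]

/-- One decoding step: apply an optional cut. -/
def step {B : ℕ} (L : Fin B → Finset (Finset α)) : Option (Fin B × Finset α) →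
    (Fin B → Finset (Finset α))
  | none => L
  | some (i, A) => applyCut L i A

/-- Decode a list of optional cut events into a layout, starting from the trivial layout. -/
def dec (S : Finset α) {B : ℕ} (l : List (Option (Fin B × Finset α))) :
    Fin B → Finset (Finset α) :=
  l.foldl step (fun _ => ({S} : Finset (Finset α)))

lemma dec_append_some (S : Finset α) {B : ℕ} (l : List (Option (Fin B × Finset α)))
    (e : Fin B × Finset α) :
    dec S (l ++ [some e]) = applyCut (dec S l) e.1 e.2 := by
  rw [dec, List.foldl_append]
  rfl

lemma dec_replicate_append (S : Finset α) {B : ℕ} (k : ℕ)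
    (l : List (Option (Fin B × Finset α))) :
    dec S (List.replicate k none ++ l) = dec S l := by
  induction k with
  | zero => rfl
  | succ k ih =>
    rw [List.replicate_succ, List.cons_append, dec, List.foldl_cons]
    exact ih

/-- Every layout is obtained by decoding a list of `(L last).card - 1` cut events, where
each event cuts off a nonempty piece avoiding the fixed element `m`. -/
lemma exists_list {S : Finset α} (m : α) (hm : m ∈ S) {B : ℕ} (hB : 0 < B) :
    ∀ (n : ℕ) (L : Fin B → Finset (Finset α)), IsLayout S L →
      (L ⟨B - 1, by omega⟩).card = n + 1 →
      ∃ l : List (Fin B × Finset α), l.length = n ∧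
        (∀ e ∈ l, e.2 ∈ (S.erase m).powerset.erase ∅) ∧
        dec S (l.map some) = L := by
  intro n
  induction n with
  | zero =>
    intro L hL hcard
    obtain ⟨p, hp⟩ := Finset.card_eq_one.mp hcard
    set li : Fin B := ⟨B - 1, by omega⟩
    have hpS : p = S := by
      have := (hL.1 li).2.2
      rw [hp] at this
      simpa using this
    subst hpS
    refine ⟨[], rfl, by simp, ?_⟩
    funext j
    have hle : j ≤ li := by
      have := j.isLt
      simp only [Fin.le_def]
      show (j : ℕ) ≤ B - 1
      omega
    have href : Refines (L li) (L j) := hL.2 j li hle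
    obtain ⟨p', hp', hpp'⟩ := href p (by rw [hp]; exact Finset.mem_singleton_self p)
    have hp'p : p' = p := Finset.Subset.antisymm (part_subset (hL.1 j) hp') hpp'
    subst hp'p
    have : L j = {p'} := by
      apply Finset.Subset.antisymm
      · intro q hq
        rw [Finset.mem_singleton]
        by_contra hne
        have hd := (hL.1 j).2.1 q hq p' hp' hne
        obtain ⟨x, hx⟩ := (hL.1 j).1 q hq
        exact (Finset.disjoint_left.mp hd) hx (part_subset (hL.1 j) hq hx)
      · simpa using hp'
    rw [this]
    rfl
  | succ n ih =>
    intro L hL hcard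
    set li : Fin B := ⟨B - 1, by omega⟩ with hlidef
    have hle_li : ∀ j : Fin B, j ≤ li := by
      intro j
      have := j.isLt
      simp only [Fin.le_def]
      show (j : ℕ) ≤ B - 1
      omega
    set Ll := L li with hLldef
    set F := Finset.univ.filter (fun j => L j = Ll) with hF
    have hFne : li ∈ F := by simp [hF]; rfl
    set i := F.min' ⟨li, hFne⟩ with hi
    have hiF : L i = Ll := by
      have := F.min'_mem ⟨li, hFne⟩
      simp only [hF, Finset.mem_filter] at this
      exact this.2
    have hmin : ∀ j : Fin B, j < i → L j ≠ Ll := by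
      intro j hj heq
      have : i ≤ j := F.min'_le j (by simp [hF, heq])
      exact absurd hj (not_lt.mpr this)
    have hforall : ∀ j : Fin B, i ≤ j → L j = Ll := by
      intro j hij
      exact refines_antisymm (hL.1 li) (hL.1 j)
        (hiF ▸ hL.2 i j hij) (hL.2 j li (hle_li j))
    have hcard2 : 1 < Ll.card := by omega
    obtain ⟨A, hA, C, hC, hACne, hsub⟩ :
        ∃ A ∈ Ll, ∃ C ∈ Ll, A ≠ C ∧ ∀ j : Fin B, j < i → ∃ p ∈ L j, A ∪ C ⊆ p := by
      rcases Nat.eq_zero_or_pos i.1 with h0 | hpos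
      · obtain ⟨A, hA, C, hC, hACne⟩ := Finset.one_lt_card.mp hcard2
        refine ⟨A, hA, C, hC, hACne, ?_⟩
        intro j hj
        exact absurd hj (by simp [Fin.lt_def, h0])
      · set i' : Fin B := ⟨i.1 - 1, by omega⟩ with hi'def
        have hi'lt : i' < i := by
          simp only [Fin.lt_def, hi'def]
          omega
        have hne' : Ll ≠ L i' := fun h => hmin i' hi'lt h.symm
        have href : Refines Ll (L i') := hiF ▸ hL.2 i' i (le_of_lt hi'lt)
        obtain ⟨A, hA, C, hC, p, hp, hne, hAp, hCp⟩ :=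
          exists_two_parts (hL.1 i') (hL.1 li) href hne'
        refine ⟨A, hA, C, hC, hne, ?_⟩
        intro j hj
        have hji' : j ≤ i' := by
          simp only [Fin.le_def, hi'def]
          have := Fin.lt_def.mp hj
          omega
        obtain ⟨p', hp', hpp'⟩ := hL.2 j i' hji' p hp
        exact ⟨p', hp', (Finset.union_subset hAp hCp).trans hpp'⟩
    have hAne : A.Nonempty := (hL.1 li).1 A hA
    have hCne : C.Nonempty := (hL.1 li).1 C hC
    have hdisj : Disjoint A C := (hL.1 li).2.1 A hA C hC hACne
    set R := (Ll.erase A).erase C with hR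
    have hCinA : C ∈ Ll.erase A := Finset.mem_erase.mpr ⟨fun h => hACne h.symm, hC⟩
    have hLleq : Ll = insert A (insert C R) := by
      rw [hR, Finset.insert_erase hCinA, Finset.insert_erase hA]
    have hmemR : ∀ q ∈ R, q ∈ Ll ∧ q ≠ A ∧ q ≠ C := by
      intro q hq
      have h1 := Finset.mem_erase.mp hq
      have h2 := Finset.mem_erase.mp h1.2
      exact ⟨h2.2, h2.1, h1.1⟩
    have hACnotR : A ∪ C ∉ R := by
      intro h
      obtain ⟨hmem, hne, -⟩ := hmemR _ h
      have hd := (hL.1 li).2.1 _ hmem A hA hne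
      obtain ⟨x, hx⟩ := hAne
      exact (Finset.disjoint_left.mp hd) (Finset.mem_union_left _ hx) hx
    set M := insert (A ∪ C) R with hM
    have hMcard : M.card = n + 1 := by
      have h1 : (Ll.erase A).card = n + 1 := by
        rw [Finset.card_erase_of_mem hA, hcard]
        omega
      have h2 : R.card = n := by
        rw [hR, Finset.card_erase_of_mem hCinA, h1]
        omega
      rw [hM, Finset.card_insert_of_notMem hACnotR, h2]
    have hRdisjAC : ∀ q ∈ R, Disjoint (A ∪ C) q := by
      intro q hq
      obtain ⟨hmem, hneA, hneC⟩ := hmemR q hq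
      exact Finset.disjoint_union_left.mpr
        ⟨(hL.1 li).2.1 A hA q hmem (Ne.symm hneA),
         (hL.1 li).2.1 C hC q hmem (Ne.symm hneC)⟩
    have hMpart : IsPartition S M := by
      refine ⟨?_, ?_, ?_⟩
      · intro p hp
        rcases Finset.mem_insert.mp hp with rfl | hp
        · obtain ⟨x, hx⟩ := hAne
          exact ⟨x, Finset.mem_union_left _ hx⟩
        · exact (hL.1 li).1 _ (hmemR _ hp).1
      · intro p hp q hq hne
        rcases Finset.mem_insert.mp hp with rfl | hp <;>
          rcases Finset.mem_insert.mp hq with rfl | hq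
        · exact absurd rfl hne
        · exact hRdisjAC q hq
        · exact (hRdisjAC p hp).symm
        · exact (hL.1 li).2.1 p (hmemR p hp).1 q (hmemR q hq).1 hne
      · have hS' : Ll.sup id = S := (hL.1 li).2.2
        rw [hLleq] at hS'
        rw [hM]
        simp only [Finset.sup_insert, id_eq] at hS' ⊢
        simp only [Finset.sup_eq_union] at hS' ⊢
        rw [Finset.union_assoc]
        exact hS'
    set L₀ : Fin B → Finset (Finset α) := fun j => if i ≤ j then M else L j with hL₀
    have hL₀layout : IsLayout S L₀ := by
      constructor
      · intro j
        simp only [hL₀]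
        split
        · exact hMpart
        · exact hL.1 j
      · intro j j' hjj'
        simp only [hL₀]
        by_cases h1 : i ≤ j
        · rw [if_pos h1, if_pos (h1.trans hjj')]
          exact fun q hq => ⟨q, hq, subset_rfl⟩
        · rw [if_neg h1]
          by_cases h2 : i ≤ j'
          · rw [if_pos h2]
            intro q hq
            rcases Finset.mem_insert.mp hq with rfl | hq
            · exact hsub j (not_le.mp h1)
            · exact hL.2 j li (hle_li j) q (hmemR q hq).1
          · rw [if_neg h2]
            exact hL.2 j j' hjj'
    have hL₀li : L₀ li = M := by
      simp only [hL₀]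
      rw [if_pos (hle_li i)]
    obtain ⟨l, hlen, hmemE, hdec⟩ := ih L₀ hL₀layout (by rw [hL₀li] at *; exact hMcard)
    set A' := if m ∈ A then C else A with hA'
    have hA'ne : A'.Nonempty := by
      rw [hA']; split <;> assumption
    have hA'm : m ∉ A' := by
      rw [hA']
      split
      · exact fun h => (Finset.disjoint_left.mp hdisj) (by assumption) h
      · assumption
    have hA'S : A' ⊆ S := by
      rw [hA']
      split
      · exact part_subset (hL.1 li) hC
      · exact part_subset (hL.1 li) hA
    have hA'mem : A' ∈ (S.erase m).powerset.erase ∅ :=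
      Finset.mem_erase.mpr ⟨hA'ne.ne_empty,
        Finset.mem_powerset.mpr (Finset.subset_erase.mpr ⟨hA'S, hA'm⟩)⟩
    have hkey : cutParts M A' = Ll := by
      have hmemM : A ∪ C ∈ M := Finset.mem_insert_self _ _
      have heraseM : M.erase (A ∪ C) = R := Finset.erase_insert hACnotR
      rw [hA']
      split
      · have h := cutParts_eq (Lj := M) (A := C) (C := A) hdisj.symm hCne
          (by rwa [Finset.union_comm]) hMpart.2.1
        rw [Finset.union_comm C A, heraseM] at h
        rw [h, Finset.insert_comm, ← hLleq]
      · have h := cutParts_eq (Lj := M) (A := A) (C := C) hdisj hAne hmemM hMpart.2.1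
        rw [heraseM] at h
        rw [h, ← hLleq]
    refine ⟨l ++ [(i, A')], by simp [hlen], ?_, ?_⟩
    · intro e he
      rcases List.mem_append.mp he with h | h
      · exact hmemE e h
      · rw [List.mem_singleton] at h
        subst h
        exact hA'mem
    · rw [List.map_append, List.map_singleton, dec_append_some, hdec]
      funext j
      rw [applyCut]
      by_cases hij : i ≤ j
      · rw [if_pos hij]
        have : L₀ j = M := by simp only [hL₀]; rw [if_pos hij]
        rw [this, hkey, hforall j hij]
      · rw [if_neg hij]
        simp only [hL₀]
        rw [if_neg hij]

/-- The event type: a cut `(i, A)`. -/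
abbrev EvType (S : Finset α) (m : α) (B : ℕ) :=
  Fin B × {A : Finset α // A ∈ (S.erase m).powerset.erase ∅}

end CardLayoutsAux

/-- The size of the design space of tree-structured multi-task architectures: for a task
set `S` with `|S| = T ≥ 1` and `B ≥ 1` branching points, the number of tree-structured
layouts is at most `((2^(T-1) - 1) · B + 1)^(T-1)`. -/
theorem card_layouts_le {α : Type*} [DecidableEq α]
    (S : Finset α) (hS : 1 ≤ S.card) (B : ℕ) (hB : 1 ≤ B) :
    {L : Fin B → Finset (Finset α) | IsLayout S L}.ncard
      ≤ ((2 ^ (S.card - 1) - 1) * B + 1) ^ (S.card - 1) := by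
  classical
  open CardLayoutsAux in
  obtain ⟨m, hm⟩ := Finset.card_pos.mp hS
  set T := S.card with hT
  set dec'' : List.Vector (Option (CardLayoutsAux.EvType S m B)) (T - 1) → (Fin B → Finset (Finset α)) :=
    fun v => CardLayoutsAux.dec S
      (v.toList.map (Option.map (fun e => (e.1, (e.2 : Finset α))))) with hdec''
  have hsub : {L : Fin B → Finset (Finset α) | IsLayout S L} ⊆ Set.range dec'' := by
    intro L hL
    simp only [Set.mem_setOf_eq] at hL
    set li : Fin B := ⟨B - 1, by omega⟩ with hli
    have hcard1 : 1 ≤ (L li).card := by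
      obtain ⟨p, hp, -⟩ := CardLayoutsAux.exists_part (hL.1 li) hm
      exact Finset.card_pos.mpr ⟨p, hp⟩
    have hcardT : (L li).card ≤ T := CardLayoutsAux.card_partition_le (hL.1 li)
    set n := (L li).card - 1 with hn
    have hnle : n ≤ T - 1 := by omega
    obtain ⟨l, hlen, hmemE, hdec⟩ :=
      CardLayoutsAux.exists_list m hm (by omega : 0 < B) n L hL
        (show (L li).card = n + 1 by omega)
    -- build the vector
    set l' : List (Option (CardLayoutsAux.EvType S m B)) :=
      l.attach.map (fun e => some (e.1.1, ⟨e.1.2, hmemE e.1 e.2⟩)) with hl'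
    have hl'len : l'.length = n := by simp [hl', hlen]
    have hveclen : (List.replicate (T - 1 - n) (none : Option (CardLayoutsAux.EvType S m B)) ++ l').length = T - 1 := by
      simp [hl'len]
      omega
    refine ⟨⟨List.replicate (T - 1 - n) none ++ l', hveclen⟩, ?_⟩
    simp only [hdec'']
    have htl : (List.Vector.toList ⟨List.replicate (T - 1 - n) (none : Option (CardLayoutsAux.EvType S m B)) ++ l', hveclen⟩)
        = List.replicate (T - 1 - n) none ++ l' := rfl
    rw [htl, List.map_append, List.map_replicate]
    have hmap : l'.map (Option.map (fun e : (CardLayoutsAux.EvType S m B) => (e.1, (e.2 : Finset α)))) = l.map some := by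
      rw [hl', List.map_map]
      have : (Option.map (fun e : (CardLayoutsAux.EvType S m B) => (e.1, (e.2 : Finset α)))) ∘
          (fun e : {x // x ∈ l} => some ((e.1.1, ⟨e.1.2, hmemE e.1 e.2⟩) : (CardLayoutsAux.EvType S m B)))
          = fun e : {x // x ∈ l} => some e.1 := by
        funext e
        simp
      rw [this]
      rw [← List.attach_map_val (l := l) (f := some)]
    rw [hmap]
    simp only [Option.map_none]
    rw [CardLayoutsAux.dec_replicate_append]
    exact hdec
  have h1 : {L : Fin B → Finset (Finset α) | IsLayout S L}.ncard
      ≤ (Set.range dec'').ncard :=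
    Set.ncard_le_ncard hsub (Set.finite_range _)
  have h2 : (Set.range dec'').ncard
      ≤ Fintype.card (List.Vector (Option (CardLayoutsAux.EvType S m B)) (T - 1)) := by
    calc (Set.range dec'').ncard = (dec'' '' Set.univ).ncard := by rw [Set.image_univ]
      _ ≤ (Set.univ : Set (List.Vector (Option (CardLayoutsAux.EvType S m B)) (T - 1))).ncard :=
          Set.ncard_image_le Set.finite_univ
      _ = Nat.card _ := Set.ncard_univ _
      _ = Fintype.card _ := Nat.card_eq_fintype_card
  have h3 : Fintype.card (List.Vector (Option (CardLayoutsAux.EvType S m B)) (T - 1))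
      = ((2 ^ (T - 1) - 1) * B + 1) ^ (T - 1) := by
    rw [card_vector]
    congr 1
    rw [Fintype.card_option, Fintype.card_prod, Fintype.card_fin, Fintype.card_coe]
    have : ((S.erase m).powerset.erase ∅).card = 2 ^ (T - 1) - 1 := by
      rw [Finset.card_erase_of_mem (Finset.empty_mem_powerset _), Finset.card_powerset,
        Finset.card_erase_of_mem hm]
    rw [this, mul_comm]
  calc {L : Fin B → Finset (Finset α) | IsLayout S L}.ncard
      ≤ (Set.range dec'').ncard := h1
    _ ≤ Fintype.card (List.Vector (Option (CardLayoutsAux.EvType S m B)) (T - 1)) := h2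
    _ = ((2 ^ (T - 1) - 1) * B + 1) ^ (T - 1) := h3
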